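/- Fix real numbers λ_1 < … < λ_{n−1} and let F: {μ ∈ ℝ^n : μ_1 < λ_1 < μ_2 < … < λ_{n−1} < μ_n} → ℝ^n be the map μ ↦ (ξ_1,…,ξ_{n−1},η), where ξ_α = −∏_{p=1}^{n}(μ_p−λ_α) / ∏_{1≤β≤n−1, β≠α}(λ_β−λ_α) and η = Σ_{p=1}^{n} μ_p − Σ_{β=1}^{n−1} λ_β. Then at every point μ of the domain, the absolute value of the Jacobian determinant of F (the determinant of the matrix of partial derivatives ∂ξ_α/∂μ_p and ∂η/∂μ_p) equals ∏_{1≤p<q≤n}(μ_q−μ_p) / ∏_{1≤α<β≤n−1}(λ_β−λ_α). -/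

import Mathlib

open MeasureTheory Complex Finset

noncomputable section

/-- `mval μ p` is the `p`-th coordinate of `μ : Fin n → ℝ` in 1-based indexing
(meaningful for `1 ≤ p ≤ n`); junk value `0` outside this range. -/
def mval {n : ℕ} (μ : Fin n → ℝ) (p : ℕ) : ℝ :=
  if h : 1 ≤ p ∧ p ≤ n then μ ⟨p - 1, by omega⟩ else 0

namespace AndersonAux

open Polynomial

lemma mval_fin {n : ℕ} (μ : Fin n → ℝ) (i : Fin n) : mval μ (i.1 + 1) = μ i := by
  have h : 1 ≤ i.1 + 1 ∧ i.1 + 1 ≤ n := ⟨Nat.le_add_left _ _, i.isLt⟩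
  rw [mval, dif_pos h]
  exact congrArg μ (Fin.ext (by simp))

lemma prod_Icc_one (n : ℕ) (f : ℕ → ℝ) :
    ∏ p ∈ Icc 1 n, f p = ∏ i : Fin n, f (i.1 + 1) := by
  rw [← Finset.Ico_add_one_right_eq_Icc, Finset.prod_Ico_eq_prod_range]
  rw [Fin.prod_univ_eq_prod_range (fun i => f (i + 1)) n]
  simp [Nat.add_comm]

lemma sum_Icc_one (n : ℕ) (f : ℕ → ℝ) :
    ∑ p ∈ Icc 1 n, f p = ∑ i : Fin n, f (i.1 + 1) := by
  rw [← Finset.Ico_add_one_right_eq_Icc, Finset.sum_Ico_eq_sum_range]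
  rw [Fin.sum_univ_eq_sum_range (fun i => f (i + 1)) n]
  simp [Nat.add_comm]

lemma pair_Icc_fin (n : ℕ) (g : ℕ → ℕ → ℝ) :
    ∏ p ∈ Icc 1 n, ∏ q ∈ Icc (p + 1) n, g p q
      = ∏ i : Fin n, ∏ j ∈ Ioi i, g (i.1 + 1) (j.1 + 1) := by
  rw [Finset.prod_sigma', Finset.prod_sigma']
  refine Finset.prod_bij' (fun x hx => ⟨⟨x.1 - 1, ?_⟩, ⟨x.2 - 1, ?_⟩⟩)
    (fun y _ => ⟨y.1.1 + 1, y.2.1 + 1⟩) ?_ ?_ ?_ ?_ ?_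
  · have := Finset.mem_sigma.mp hx
    simp only [Finset.mem_Icc] at this; omega
  · have := Finset.mem_sigma.mp hx
    simp only [Finset.mem_Icc] at this; omega
  · intro a ha
    have := Finset.mem_sigma.mp ha
    simp only [Finset.mem_Icc] at this
    simp only [Finset.mem_sigma, Finset.mem_univ, Finset.mem_Ioi, true_and, Fin.lt_def]
    omega
  · intro a ha
    have := Finset.mem_sigma.mp ha
    simp only [Finset.mem_univ, Finset.mem_Ioi, true_and, Fin.lt_def] at this
    simp only [Finset.mem_sigma, Finset.mem_Icc]
    omega
  · intro a ha
    have := Finset.mem_sigma.mp ha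
    simp only [Finset.mem_Icc] at this
    obtain ⟨a, b⟩ := a
    simp only at this
    dsimp only
    have h1 : a - 1 + 1 = a := by omega
    have h2 : b - 1 + 1 = b := by omega
    rw [h1, h2]
  · intro a ha
    obtain ⟨i, j⟩ := a
    dsimp only
    simp only [Nat.add_sub_cancel, Fin.eta]
  · intro a ha
    have := Finset.mem_sigma.mp ha
    simp only [Finset.mem_Icc] at this
    dsimp only
    congr 1 <;> omega

lemma offdiag_abs (m : ℕ) (lam : ℕ → ℝ) :
    ∏ a ∈ Icc 1 m, ∏ b ∈ (Icc 1 m).erase a, |lam b - lam a|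
      = (∏ a ∈ Icc 1 m, ∏ b ∈ Icc (a + 1) m, |lam b - lam a|) ^ 2 := by
  have hsplit : ∀ a ∈ Icc 1 m, (Icc 1 m).erase a = Icc 1 (a - 1) ∪ Icc (a + 1) m := by
    intro a ha
    simp only [Finset.mem_Icc] at ha
    ext b
    simp only [Finset.mem_erase, Finset.mem_Icc, Finset.mem_union]
    omega
  have hdisj : ∀ a ∈ Icc 1 m, Disjoint (Icc 1 (a - 1)) (Icc (a + 1) m) := by
    intro a ha
    simp only [Finset.mem_Icc] at ha
    rw [Finset.disjoint_left]
    intro b hb hb'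
    simp only [Finset.mem_Icc] at hb hb'
    omega
  calc ∏ a ∈ Icc 1 m, ∏ b ∈ (Icc 1 m).erase a, |lam b - lam a|
      = ∏ a ∈ Icc 1 m, ((∏ b ∈ Icc 1 (a - 1), |lam b - lam a|) *
          ∏ b ∈ Icc (a + 1) m, |lam b - lam a|) := by
        refine Finset.prod_congr rfl fun a ha => ?_
        rw [hsplit a ha, Finset.prod_union (hdisj a ha)]
    _ = (∏ a ∈ Icc 1 m, ∏ b ∈ Icc 1 (a - 1), |lam b - lam a|) *
          ∏ a ∈ Icc 1 m, ∏ b ∈ Icc (a + 1) m, |lam b - lam a| := Finset.prod_mul_distrib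
    _ = (∏ a ∈ Icc 1 m, ∏ b ∈ Icc (a + 1) m, |lam b - lam a|) ^ 2 := by
        rw [sq]; congr 1
        rw [Finset.prod_comm' (t' := Icc 1 m) (s' := fun b => Icc (b + 1) m)
          (fun a b => by simp only [Finset.mem_Icc]; omega)]
        exact Finset.prod_congr rfl fun b _ => Finset.prod_congr rfl fun a _ => abs_sub_comm _ _

def lagP {n : ℕ} (b : Fin n → ℝ) (p : Fin n) : ℝ[X] :=
  ∏ q ∈ Finset.univ.erase p, (X - C (b q))

lemma lagP_monic {n : ℕ} (b : Fin n → ℝ) (p : Fin n) : (lagP b p).Monic :=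
  monic_prod_of_monic _ _ fun q _ => monic_X_sub_C _

lemma lagP_natDegree {n : ℕ} (b : Fin n → ℝ) (p : Fin n) :
    (lagP b p).natDegree = n - 1 := by
  rw [lagP, natDegree_prod_of_monic _ _ fun q _ => monic_X_sub_C _]
  simp [natDegree_X_sub_C, Finset.card_erase_of_mem]

lemma lagP_eval {n : ℕ} (b : Fin n → ℝ) (p : Fin n) (x : ℝ) :
    (lagP b p).eval x = ∏ q ∈ Finset.univ.erase p, (x - b q) := by
  simp [lagP, eval_prod]

def coeffM {n : ℕ} (b : Fin n → ℝ) : Matrix (Fin n) (Fin n) ℝ :=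
  Matrix.of fun j p => (lagP b p).coeff j.1

lemma eval_factor {n : ℕ} (hn : 1 ≤ n) (b a : Fin n → ℝ) :
    (Matrix.of fun i p => (lagP b p).eval (a i)) = Matrix.vandermonde a * coeffM b := by
  ext i p
  rw [Matrix.mul_apply, Matrix.of_apply]
  rw [Polynomial.eval_eq_sum_range' (n := n) (by rw [lagP_natDegree]; omega) (a i)]
  rw [← Fin.sum_univ_eq_sum_range (fun j => (lagP b p).coeff j * a i ^ j) n]
  simp [coeffM, Matrix.vandermonde_apply, mul_comm]

lemma eval_self {n : ℕ} (b : Fin n → ℝ) :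
    (Matrix.of fun i p => (lagP b p).eval (b i))
      = Matrix.diagonal (fun p => ∏ q ∈ Finset.univ.erase p, (b p - b q)) := by
  ext i p
  by_cases h : i = p
  · subst h
    simp [Matrix.diagonal_apply_eq, lagP_eval]
  · rw [Matrix.of_apply, lagP_eval, Matrix.diagonal_apply_ne _ h]
    exact Finset.prod_eq_zero (Finset.mem_erase.mpr ⟨h, Finset.mem_univ i⟩) (by ring)

lemma det_coeffM {n : ℕ} (hn : 1 ≤ n) (b : Fin n → ℝ) :
    (Matrix.vandermonde b).det * (coeffM b).det
      = ∏ p, ∏ q ∈ Finset.univ.erase p, (b p - b q) := by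
  rw [← Matrix.det_mul, ← eval_factor hn b b, eval_self]
  exact Matrix.det_diagonal

lemma offdiag_abs_fin {n : ℕ} (b : Fin n → ℝ) :
    ∏ p, ∏ q ∈ Finset.univ.erase p, |b p - b q|
      = (∏ p, ∏ q ∈ Ioi p, |b q - b p|) ^ 2 := by
  have key2 : ∏ i, ∏ j ∈ Ioi i, (|b j - b i| * |b i - b j|)
      = ∏ p, ∏ q ∈ Finset.univ.erase p, |b p - b q| :=
    (Finset.prod_prod_Ioi_mul_eq_prod_prod_off_diag (fun i j => |b i - b j|)).trans (by
      refine Finset.prod_congr rfl fun p _ => ?_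
      refine Finset.prod_congr (by ext q; simp [eq_comm]) fun q _ => abs_sub_comm _ _)
  rw [← key2, sq, ← Finset.prod_mul_distrib]
  refine Finset.prod_congr rfl fun p _ => ?_
  rw [← Finset.prod_mul_distrib]
  exact Finset.prod_congr rfl fun q _ => by rw [abs_sub_comm (b p) (b q)]

end AndersonAux

/-- The interlacing domain: `μ_1 < λ_1 < μ_2 < λ_2 < … < λ_{n-1} < μ_n`. -/
def Xi (n : ℕ) (lam : ℕ → ℝ) : Set (Fin n → ℝ) :=
  {μ | ∀ α : ℕ, 1 ≤ α → α ≤ n - 1 → mval μ α < lam α ∧ lam α < mval μ (α + 1)}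

/-- `ξ_α = -∏_{p=1}^n (μ_p - λ_α) / ∏_{β ≠ α} (λ_β - λ_α)`. -/
def xiv (n : ℕ) (lam : ℕ → ℝ) (μ : Fin n → ℝ) (α : ℕ) : ℝ :=
  -(∏ p ∈ Icc 1 n, (mval μ p - lam α)) /
    ∏ β ∈ (Icc 1 (n - 1)).erase α, (lam β - lam α)

/-- `η = Σ_p μ_p - Σ_β λ_β`. -/
def etav (n : ℕ) (lam : ℕ → ℝ) (μ : Fin n → ℝ) : ℝ :=
  ∑ p ∈ Icc 1 n, mval μ p - ∑ β ∈ Icc 1 (n - 1), lam β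

/-- The Anderson-type change of variables `μ ↦ (ξ_1, …, ξ_{n-1}, η)`. -/
def Fmap (n : ℕ) (lam : ℕ → ℝ) (μ : Fin n → ℝ) : Fin n → ℝ :=
  fun k => if k.1 + 1 ≤ n - 1 then xiv n lam μ (k.1 + 1) else etav n lam μ

open AndersonAux

/-- Lemma 2.3(c): the Jacobian of the change of variables `μ ↦ (ξ, η)`. -/
theorem anderson_jacobian
    (n : ℕ) (hn : 1 ≤ n) (lam : ℕ → ℝ)
    (hlam : ∀ α : ℕ, 1 ≤ α → α + 1 ≤ n - 1 → lam α < lam (α + 1))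
    (μ : Fin n → ℝ) (hμ : μ ∈ Xi n lam) :
    DifferentiableAt ℝ (Fmap n lam) μ ∧
    |LinearMap.det (fderiv ℝ (Fmap n lam) μ : (Fin n → ℝ) →ₗ[ℝ] (Fin n → ℝ))| =
      (∏ p ∈ Icc 1 n, ∏ q ∈ Icc (p + 1) n, (mval μ q - mval μ p)) /
        ∏ α ∈ Icc 1 (n - 1), ∏ β ∈ Icc (α + 1) (n - 1), (lam β - lam α) := by
  classical
  obtain ⟨m, rfl⟩ : ∃ m, n = m + 1 := ⟨n - 1, by omega⟩
  clear hn
  -- monotonicity of lam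
  have lammono : ∀ a b : ℕ, 1 ≤ a → a < b → b ≤ m → lam a < lam b := by
    intro a b
    induction b with
    | zero => omega
    | succ b ih =>
      intro h1 h2 h3
      rcases Nat.lt_succ_iff_lt_or_eq.mp h2 with h' | h'
      · exact (ih h1 h' (by omega)).trans (hlam b (by omega) (by omega))
      · subst h'
        exact hlam a h1 (by omega)
  -- monotonicity of μ
  have cons : ∀ a : ℕ, (h : a + 1 < m + 1) → μ ⟨a, by omega⟩ < μ ⟨a + 1, h⟩ := by
    intro a h
    have H := hμ (a + 1) (by omega) (by omega)
    have e1 : mval μ (a + 1) = μ ⟨a, by omega⟩ := mval_fin μ ⟨a, by omega⟩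
    have e2 : mval μ (a + 1 + 1) = μ ⟨a + 1, h⟩ := mval_fin μ ⟨a + 1, h⟩
    rw [e1, e2] at H
    exact H.1.trans H.2
  have mumononat : ∀ (a b : ℕ) (ha : a < m + 1) (hb : b < m + 1), a < b →
      μ ⟨a, ha⟩ < μ ⟨b, hb⟩ := by
    intro a b ha hb
    induction b with
    | zero => omega
    | succ b ih =>
      intro h
      rcases Nat.lt_succ_iff_lt_or_eq.mp h with h' | h'
      · exact (ih (by omega) h').trans (cons b hb)
      · subst h'
        exact cons a hb
  have mumono : ∀ i j : Fin (m + 1), i < j → μ i < μ j := by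
    intro i j hij
    have := mumononat i.1 j.1 i.isLt j.isLt hij
    simpa using this
  -- the Jacobian matrix
  set J : Matrix (Fin (m + 1)) (Fin (m + 1)) ℝ :=
    Matrix.of fun k p => if k.1 + 1 ≤ m then
        -(∏ β ∈ (Icc 1 m).erase (k.1 + 1), (lam β - lam (k.1 + 1)))⁻¹ *
          ∏ q ∈ Finset.univ.erase p, (μ q - lam (k.1 + 1))
      else 1 with hJ
  have hasF : HasFDerivAt (Fmap (m + 1) lam)
      (LinearMap.toContinuousLinearMap (Matrix.toLin' J)) μ := by
    rw [hasFDerivAt_pi']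
    intro k
    by_cases hk : k.1 + 1 ≤ m
    · have hP : HasFDerivAt (fun x : Fin (m + 1) → ℝ => ∏ i, (x i - lam (k.1 + 1)))
          (∑ i, (∏ q ∈ Finset.univ.erase i, (μ q - lam (k.1 + 1))) •
            (ContinuousLinearMap.proj i : (Fin (m + 1) → ℝ) →L[ℝ] ℝ)) μ :=
        HasFDerivAt.finset_prod fun i _ => (hasFDerivAt_apply i μ).sub_const _
      have hXi := hP.const_mul
        (-(∏ β ∈ (Icc 1 m).erase (k.1 + 1), (lam β - lam (k.1 + 1)))⁻¹)
      have hfun : (fun x => Fmap (m + 1) lam x k)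
          = fun x => -(∏ β ∈ (Icc 1 m).erase (k.1 + 1), (lam β - lam (k.1 + 1)))⁻¹ *
              ∏ i, (x i - lam (k.1 + 1)) := by
        funext x
        simp only [Fmap, Nat.add_sub_cancel, if_pos hk, xiv]
        rw [prod_Icc_one (m + 1) (fun p => mval x p - lam (k.1 + 1))]
        simp only [mval_fin]
        ring
      rw [hfun]
      refine hXi.congr_fderiv ?_
      ext v
      simp only [ContinuousLinearMap.smul_apply, ContinuousLinearMap.coe_sum',
        Finset.sum_apply, ContinuousLinearMap.smul_apply, ContinuousLinearMap.proj_apply,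
        ContinuousLinearMap.coe_comp', Function.comp_apply,
        LinearMap.coe_toContinuousLinearMap', Matrix.toLin'_apply, Matrix.mulVec,
        dotProduct, hJ, Matrix.of_apply, if_pos hk, smul_eq_mul]
      rw [Finset.mul_sum]
      exact Finset.sum_congr rfl fun p _ => by ring
    · have hS : HasFDerivAt (fun x : Fin (m + 1) → ℝ => ∑ i, x i)
          (∑ i, (ContinuousLinearMap.proj i : (Fin (m + 1) → ℝ) →L[ℝ] ℝ)) μ :=
        HasFDerivAt.fun_sum fun i _ => hasFDerivAt_apply i μ
      have hfun : (fun x => Fmap (m + 1) lam x k)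
          = fun x => (∑ i, x i) - ∑ β ∈ Icc 1 m, lam β := by
        funext x
        simp only [Fmap, Nat.add_sub_cancel, if_neg hk, etav]
        rw [sum_Icc_one (m + 1) (fun p => mval x p)]
        simp only [mval_fin]
      rw [hfun]
      refine (hS.sub_const _).congr_fderiv ?_
      ext v
      simp only [ContinuousLinearMap.coe_sum', Finset.sum_apply,
        ContinuousLinearMap.proj_apply, ContinuousLinearMap.coe_comp', Function.comp_apply,
        LinearMap.coe_toContinuousLinearMap', Matrix.toLin'_apply, Matrix.mulVec,
        dotProduct, hJ, Matrix.of_apply, if_neg hk, one_mul]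
  refine ⟨hasF.differentiableAt, ?_⟩
  rw [hasF.fderiv, LinearMap.coe_toContinuousLinearMap, LinearMap.det_toLin']
  -- the Vandermonde quantities
  set Vmu : ℝ := ∏ i : Fin (m + 1), ∏ j ∈ Ioi i, (μ j - μ i) with hVmu
  set Vlam : ℝ := ∏ i : Fin m, ∏ j ∈ Ioi i, (lam (j.1 + 1) - lam (i.1 + 1)) with hVlam
  have hVmupos : 0 < Vmu := Finset.prod_pos fun i _ => Finset.prod_pos fun j hj =>
    sub_pos.2 (mumono i j (Finset.mem_Ioi.mp hj))
  have hVlampos : 0 < Vlam := Finset.prod_pos fun i _ => Finset.prod_pos fun j hj =>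
    sub_pos.2 (lammono (i.1 + 1) (j.1 + 1) (by omega)
      (by have := Finset.mem_Ioi.mp hj; omega) (by omega))
  have hVlamne : Vlam ≠ 0 := ne_of_gt hVlampos
  -- auxiliary matrices
  set dnat : ℕ → ℝ := fun i => if i + 1 ≤ m then
      (-1 : ℝ) ^ (m + 1) * (∏ β ∈ (Icc 1 m).erase (i + 1), (lam β - lam (i + 1)))⁻¹
    else 1 with hdnat
  set B : Matrix (Fin (m + 1)) (Fin (m + 1)) ℝ :=
    Matrix.of fun k j => if k.1 + 1 ≤ m then (lam (k.1 + 1)) ^ (j.1)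
      else if j.1 = m then (1 : ℝ) else 0 with hB
  set M0 : Matrix (Fin (m + 1)) (Fin (m + 1)) ℝ :=
    Matrix.of fun k p => if k.1 + 1 ≤ m then (lagP μ p).eval (lam (k.1 + 1)) else 1 with hM0
  have hJfac : J = Matrix.diagonal (fun k : Fin (m + 1) => dnat k.1) * M0 := by
    ext k p
    rw [Matrix.diagonal_mul]
    by_cases hk : k.1 + 1 ≤ m
    · simp only [hJ, hM0, hdnat, Matrix.of_apply, if_pos hk, lagP_eval]
      rw [show (∏ q ∈ Finset.univ.erase p, (μ q - lam (k.1 + 1)))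
          = ∏ q ∈ Finset.univ.erase p, (-1) * (lam (k.1 + 1) - μ q) from
        Finset.prod_congr rfl fun q _ => by ring]
      rw [Finset.prod_mul_distrib, Finset.prod_const,
        Finset.card_erase_of_mem (Finset.mem_univ p), Finset.card_univ, Fintype.card_fin,
        Nat.add_sub_cancel, pow_succ]
      ring
    · simp only [hJ, hM0, hdnat, Matrix.of_apply, if_neg hk, one_mul]
  have hM0fac : M0 = B * coeffM μ := by
    ext k p
    rw [Matrix.mul_apply]
    by_cases hk : k.1 + 1 ≤ m
    · simp only [hM0, hB, Matrix.of_apply, if_pos hk]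
      rw [Polynomial.eval_eq_sum_range' (n := m + 1)
        (by rw [lagP_natDegree]; omega) (lam (k.1 + 1))]
      rw [← Fin.sum_univ_eq_sum_range
        (fun j => (lagP μ p).coeff j * (lam (k.1 + 1)) ^ j) (m + 1)]
      exact Finset.sum_congr rfl fun j _ => by rw [coeffM, Matrix.of_apply]; ring
    · simp only [hM0, hB, Matrix.of_apply, if_neg hk]
      have hstep : ∀ j : Fin (m + 1), (if j.1 = m then (1 : ℝ) else 0) * coeffM μ j p
          = if j = Fin.last m then coeffM μ j p else 0 := by
        intro j
        by_cases hj : j = Fin.last m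
        · subst hj; simp [Fin.val_last]
        · rw [if_neg (by simpa [Fin.ext_iff, Fin.val_last] using hj), if_neg hj, zero_mul]
      rw [Finset.sum_congr rfl fun j _ => hstep j,
        Finset.sum_ite_eq' Finset.univ (Fin.last m)]
      simp only [Finset.mem_univ, if_true]
      have h1 : (lagP μ p).coeff m = 1 := by
        have h2 := (lagP_monic μ p).coeff_natDegree
        rwa [lagP_natDegree, Nat.add_sub_cancel] at h2
      simp [coeffM, Fin.val_last, h1]
  have hBdet : B.det = Vlam := by
    rw [Matrix.det_succ_row B (Fin.last m), Finset.sum_eq_single (Fin.last m)]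
    · have hsub : (B.submatrix (Fin.last m).succAbove (Fin.last m).succAbove)
          = Matrix.vandermonde (fun i : Fin m => lam (i.1 + 1)) := by
        ext i j
        have hi : i.1 + 1 ≤ m := i.isLt
        simp [hB, Matrix.submatrix_apply, Fin.succAbove_last, Fin.coe_castSucc,
          Matrix.vandermonde_apply, hi]
      rw [hsub, Matrix.det_vandermonde]
      have hBll : B (Fin.last m) (Fin.last m) = 1 := by
        simp [hB, Fin.val_last]
      rw [hBll, Fin.val_last, Even.neg_one_pow (Even.add_self m), one_mul, one_mul, hVlam]
    · intro j _ hj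
      have : B (Fin.last m) j = 0 := by
        have hj' : j.1 ≠ m := by simpa [Fin.ext_iff, Fin.val_last] using hj
        simp [hB, Fin.val_last, hj']
      rw [this, mul_zero, zero_mul]
    · intro h
      exact absurd (Finset.mem_univ _) h
  -- determinant pieces in absolute value
  have hcoeffabs : |(coeffM μ).det| = Vmu := by
    have h1 := det_coeffM (n := m + 1) (by omega) μ
    have h2 : |(Matrix.vandermonde μ).det| = Vmu := by
      rw [Matrix.det_vandermonde]
      exact abs_of_pos hVmupos
    have h3 : |∏ p, ∏ q ∈ Finset.univ.erase p, (μ p - μ q)| = Vmu ^ 2 := by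
      rw [Finset.abs_prod,
        Finset.prod_congr rfl fun p _ => Finset.abs_prod _ _,
        offdiag_abs_fin]
      congr 1
      refine Finset.prod_congr rfl fun p _ => Finset.prod_congr rfl fun q hq => ?_
      exact abs_of_pos (sub_pos.2 (mumono _ _ (Finset.mem_Ioi.mp hq)))
    have h4 : Vmu * |(coeffM μ).det| = Vmu ^ 2 := by
      conv_lhs => rw [← h2]
      rw [← abs_mul, h1, h3]
    rw [pow_two] at h4
    exact mul_left_cancel₀ (ne_of_gt hVmupos) h4
  have hDabs : ∏ α ∈ Icc 1 m, |∏ β ∈ (Icc 1 m).erase α, (lam β - lam α)| = Vlam ^ 2 := by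
    rw [Finset.prod_congr rfl fun α _ => Finset.abs_prod _ _, offdiag_abs]
    congr 1
    rw [pair_Icc_fin m (fun a b => |lam b - lam a|), hVlam]
    refine Finset.prod_congr rfl fun i _ => Finset.prod_congr rfl fun j hj => ?_
    refine abs_of_pos (sub_pos.2 (lammono (i.1 + 1) (j.1 + 1) (by omega) ?_ (by omega)))
    have := Finset.mem_Ioi.mp hj
    omega
  have hdabs : ∏ k : Fin (m + 1), |dnat k.1| = (Vlam ^ 2)⁻¹ := by
    rw [Fin.prod_univ_eq_prod_range (fun i => |dnat i|) (m + 1), Finset.prod_range_succ]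
    have hlast : dnat m = 1 := by rw [hdnat]; simp
    rw [hlast, abs_one, mul_one]
    have hstep : ∀ i ∈ Finset.range m, |dnat i|
        = |∏ β ∈ (Icc 1 m).erase (i + 1), (lam β - lam (i + 1))|⁻¹ := by
      intro i hi
      have hi' : i + 1 ≤ m := Finset.mem_range.mp hi
      rw [hdnat]
      simp only [if_pos hi']
      rw [abs_mul, _root_.abs_pow, abs_neg, abs_one, one_pow, one_mul, abs_inv]
    rw [Finset.prod_congr rfl hstep]
    rw [← Fin.prod_univ_eq_prod_range
      (fun i => |∏ β ∈ (Icc 1 m).erase (i + 1), (lam β - lam (i + 1))|⁻¹) m]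
    rw [← prod_Icc_one m (fun α => |∏ β ∈ (Icc 1 m).erase α, (lam β - lam α)|⁻¹)]
    rw [Finset.prod_inv_distrib, hDabs]
  -- assembling
  have hfinal : |J.det| = Vmu / Vlam := by
    calc |J.det| = (∏ k : Fin (m + 1), |dnat k.1|) * (|B.det| * |(coeffM μ).det|) := by
          rw [hJfac, Matrix.det_mul, hM0fac, Matrix.det_mul, Matrix.det_diagonal,
            abs_mul, abs_mul, Finset.abs_prod]
      _ = (Vlam ^ 2)⁻¹ * (Vlam * Vmu) := by
          rw [hdabs, hcoeffabs, hBdet, abs_of_pos hVlampos]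
      _ = Vmu / Vlam := by
          rw [sq]
          field_simp
  rw [hfinal]
  have hnum : (∏ p ∈ Icc 1 (m + 1), ∏ q ∈ Icc (p + 1) (m + 1), (mval μ q - mval μ p)) = Vmu := by
    rw [pair_Icc_fin (m + 1) (fun p q => mval μ q - mval μ p), hVmu]
    exact Finset.prod_congr rfl fun i _ => Finset.prod_congr rfl fun j _ => by
      rw [mval_fin, mval_fin]
  have hden : (∏ α ∈ Icc 1 ((m + 1) - 1), ∏ β ∈ Icc (α + 1) ((m + 1) - 1), (lam β - lam α))
      = Vlam := by
    rw [Nat.add_sub_cancel, pair_Icc_fin m (fun a b => lam b - lam a), hVlam]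
  rw [hnum, hden]
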